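/- Consider a linear dynamical system with random state and observation sequences satisfying x_{t+1} = A x_t + B u_t + w_t and y_t = C x_t + D u_t + z_t, where x_0 and the random vectors (u_t)_{t≥0}, (w_t)_{t≥0}, (z_t)_{t≥0} are mutually independent, all have mean zero and finite second moments, and each u_t satisfies E[u_t u_t^⊤] = I_p. Fix integers k, s ≥ 1, matrices α_1, …, α_s ∈ ℝ^{m×m}, and an integer t ≥ k + s, and set ŷ_t = y_t − Σ_{i=1}^{s} α_i y_{t−k−i}. Then for every integer j with 0 ≤ j ≤ k, E[ŷ_t u_{t−j}^⊤] = D if j = 0, and E[ŷ_t u_{t−j}^⊤] = C A^{j−1} B if 1 ≤ j ≤ k. -/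

import Mathlib

open MeasureTheory ProbabilityTheory
open scoped ProbabilityTheory

/-- Embedding of `ℝ^d` into `ℕ → ℝ` (by zero padding), used to state mutual independence of
random vectors of different dimensions as independence of a single family. -/
def embedVec (d : ℕ) (v : Fin d → ℝ) : ℕ → ℝ :=
  fun i => if h : i < d then v ⟨i, h⟩ else 0

/-- Helper: the product of two functions in `L²` of a probability space is integrable. -/
theorem L2mul {Ω : Type*} [MeasureSpace Ω] {f g : Ω → ℝ}
    (hf : MemLp f 2 ℙ) (hg : MemLp g 2 ℙ) :
    Integrable (fun ω => f ω * g ω) ℙ := by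
  have := hg.smul (q := 2) (p := 2) (r := 1) hf
    (hpqr := ⟨by simp [one_div, ENNReal.inv_two_add_inv_two]⟩)
  rw [memLp_one_iff_integrable] at this
  exact this

/-- (Cross-covariance of control and observation gives the Markov parameters.)
For a linear dynamical system `x (t+1) = A x t + B u t + w t`, `y t = C x t + D u t + z t` with
`x 0` and the `u`'s, `w`'s, `z`'s mutually independent, mean zero, finite second moments and
`E[u_t u_tᵀ] = I`, for `k, s ≥ 1`, matrices `α₁, …, α_s`, `t ≥ k + s` and
`ŷ_t = y_t − ∑_{i=1}^s α_i y_{t−k−i}`, we have `E[ŷ_t u_{t−j}ᵀ] = D` if `j = 0` and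
`E[ŷ_t u_{t−j}ᵀ] = C A^{j−1} B` if `1 ≤ j ≤ k`. -/
theorem markov_parameter_estimator_unbiased
    {Ω : Type*} [MeasureSpace Ω] [IsProbabilityMeasure (ℙ : Measure Ω)]
    (n p m : ℕ)
    (A : Matrix (Fin n) (Fin n) ℝ) (B : Matrix (Fin n) (Fin p) ℝ)
    (C : Matrix (Fin m) (Fin n) ℝ) (D : Matrix (Fin m) (Fin p) ℝ)
    (x : ℕ → Ω → Fin n → ℝ) (u : ℕ → Ω → Fin p → ℝ) (w : ℕ → Ω → Fin n → ℝ)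
    (z : ℕ → Ω → Fin m → ℝ) (y : ℕ → Ω → Fin m → ℝ)
    (hx : ∀ (t : ℕ) (ω : Ω), x (t + 1) ω = A.mulVec (x t ω) + B.mulVec (u t ω) + w t ω)
    (hy : ∀ (t : ℕ) (ω : Ω), y t ω = C.mulVec (x t ω) + D.mulVec (u t ω) + z t ω)
    (hmeasx0 : Measurable (x 0)) (hmeasu : ∀ t, Measurable (u t))
    (hmeasw : ∀ t, Measurable (w t)) (hmeasz : ∀ t, Measurable (z t))
    -- mutual independence of `x 0` and all the `u t`, `w t`, `z t`
    (hindep : iIndepFun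
      (fun idx : Option (ℕ × Fin 3) =>
        idx.elim (fun ω => embedVec n (x 0 ω)) (fun tj =>
          if tj.2 = 0 then fun ω => embedVec p (u tj.1 ω)
          else if tj.2 = 1 then fun ω => embedVec n (w tj.1 ω)
          else fun ω => embedVec m (z tj.1 ω))) ℙ)
    -- mean zero
    (hx0mean : ∀ a, ∫ ω, x 0 ω a = 0)
    (humean : ∀ t a, ∫ ω, u t ω a = 0)
    (hwmean : ∀ t a, ∫ ω, w t ω a = 0)
    (hzmean : ∀ t a, ∫ ω, z t ω a = 0)
    -- finite second moments
    (hx0mom : ∀ a, MemLp (fun ω => x 0 ω a) 2 ℙ)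
    (humom : ∀ t a, MemLp (fun ω => u t ω a) 2 ℙ)
    (hwmom : ∀ t a, MemLp (fun ω => w t ω a) 2 ℙ)
    (hzmom : ∀ t a, MemLp (fun ω => z t ω a) 2 ℙ)
    -- isotropic control: `E[u_t u_tᵀ] = I_p`
    (hucov : ∀ t (a b : Fin p), ∫ ω, u t ω a * u t ω b = if a = b then 1 else 0)
    (k s : ℕ) (hk : 1 ≤ k) (hs : 1 ≤ s)
    (α : ℕ → Matrix (Fin m) (Fin m) ℝ)
    (t : ℕ) (ht : k + s ≤ t) :
    ∀ j : ℕ, j ≤ k → ∀ (a : Fin m) (b : Fin p),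
      ∫ ω, (y t ω - ∑ i ∈ Finset.Icc 1 s, (α i).mulVec (y (t - k - i) ω)) a * u (t - j) ω b
        = (if j = 0 then D else C * A ^ (j - 1) * B) a b := by
  -- pairwise independence of components
  have hIxu : ∀ (r : ℕ) (c : Fin n) (b : Fin p),
      IndepFun (fun ω => x 0 ω c) (fun ω => u r ω b) ℙ := by
    intro r c b
    have h := (hindep.indepFun (show (none : Option (ℕ × Fin 3)) ≠ some (r, 0) by simp)).comp
      (measurable_pi_apply (c : ℕ)) (measurable_pi_apply (b : ℕ))
    simpa [Function.comp_def, embedVec] using h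
  have hIuu : ∀ (i r : ℕ), i ≠ r → ∀ (c b : Fin p),
      IndepFun (fun ω => u i ω c) (fun ω => u r ω b) ℙ := by
    intro i r hir c b
    have h := (hindep.indepFun
        (show (some (i, (0 : Fin 3)) : Option (ℕ × Fin 3)) ≠ some (r, 0) by simp [hir])).comp
      (measurable_pi_apply (c : ℕ)) (measurable_pi_apply (b : ℕ))
    simpa [Function.comp_def, embedVec] using h
  have hIwu : ∀ (i r : ℕ) (c : Fin n) (b : Fin p),
      IndepFun (fun ω => w i ω c) (fun ω => u r ω b) ℙ := by
    intro i r c b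
    have h := (hindep.indepFun
        (show (some (i, (1 : Fin 3)) : Option (ℕ × Fin 3)) ≠ some (r, 0) by simp)).comp
      (measurable_pi_apply (c : ℕ)) (measurable_pi_apply (b : ℕ))
    simpa [Function.comp_def, embedVec, show (1 : Fin 3) ≠ 0 by decide] using h
  have hIzu : ∀ (i r : ℕ) (c : Fin m) (b : Fin p),
      IndepFun (fun ω => z i ω c) (fun ω => u r ω b) ℙ := by
    intro i r c b
    have h := (hindep.indepFun
        (show (some (i, (2 : Fin 3)) : Option (ℕ × Fin 3)) ≠ some (r, 0) by simp)).comp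
      (measurable_pi_apply (c : ℕ)) (measurable_pi_apply (b : ℕ))
    simpa [Function.comp_def, embedVec, show (2 : Fin 3) ≠ 0 by decide,
      show (2 : Fin 3) ≠ 1 by decide] using h
  -- orthogonality helper
  have horth : ∀ (r : ℕ) (b : Fin p) (g : Ω → ℝ), MemLp g 2 ℙ →
      IndepFun g (fun ω => u r ω b) ℙ → ∫ ω, g ω * u r ω b = 0 := by
    intro r b g hg hind
    have h : ∫ ω, g ω * u r ω b = (∫ ω, g ω) * ∫ ω, u r ω b :=
      hind.integral_fun_mul_eq_mul_integral hg.1 (humom r b).1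
    rw [h, humean, mul_zero]
  -- second moments of x and y components
  have hxmom : ∀ τ (c : Fin n), MemLp (fun ω => x τ ω c) 2 ℙ := by
    intro τ
    induction τ with
    | zero => exact hx0mom
    | succ τ ih =>
      intro c
      have hrw : (fun ω => x (τ + 1) ω c)
          = fun ω => (∑ d, A c d * x τ ω d) + ((∑ d, B c d * u τ ω d) + w τ ω c) := by
        funext ω; rw [hx]; simp [Matrix.mulVec, dotProduct, add_assoc]
      rw [hrw]
      exact (memLp_finset_sum _ (fun d _ => (ih d).const_mul _)).add
        ((memLp_finset_sum _ (fun d _ => ((humom τ d).const_mul _))).add (hwmom τ c))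
  have hymom : ∀ τ (a : Fin m), MemLp (fun ω => y τ ω a) 2 ℙ := by
    intro τ a
    have hrw : (fun ω => y τ ω a)
        = fun ω => (∑ d, C a d * x τ ω d) + ((∑ d, D a d * u τ ω d) + z τ ω a) := by
      funext ω; rw [hy]; simp [Matrix.mulVec, dotProduct, add_assoc]
    rw [hrw]
    exact (memLp_finset_sum _ (fun d _ => (hxmom τ d).const_mul _)).add
      ((memLp_finset_sum _ (fun d _ => ((humom τ d).const_mul _))).add (hzmom τ a))
  -- covariance of u with u (general indices)
  have hcov_uu : ∀ (i r : ℕ) (c b : Fin p),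
      ∫ ω, u i ω c * u r ω b = if i = r then (if c = b then 1 else 0) else 0 := by
    intro i r c b
    by_cases hir : i = r
    · subst hir; rw [hucov, if_pos rfl]
    · rw [if_neg hir, horth r b _ (humom i c) (hIuu i r hir c b)]
  -- covariance of x with u
  have hcov_xu : ∀ τ (r : ℕ) (c : Fin n) (b : Fin p),
      ∫ ω, x τ ω c * u r ω b = if r < τ then (A ^ (τ - r - 1) * B) c b else 0 := by
    intro τ
    induction τ with
    | zero =>
      intro r c b
      rw [if_neg (Nat.not_lt_zero r)]
      exact horth r b _ (hx0mom c) (hIxu r c b)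
    | succ τ ih =>
      intro r c b
      have hrw : (fun ω => x (τ + 1) ω c * u r ω b)
          = fun ω => (∑ d, A c d * (x τ ω d * u r ω b))
            + ((∑ d, B c d * (u τ ω d * u r ω b)) + w τ ω c * u r ω b) := by
        funext ω; rw [hx]
        simp [Matrix.mulVec, dotProduct, add_mul, Finset.sum_mul, mul_assoc, add_assoc]
      have i1 : ∀ d : Fin n, Integrable (fun ω => A c d * (x τ ω d * u r ω b)) ℙ :=
        fun d => (L2mul (hxmom τ d) (humom r b)).const_mul _
      have i2 : ∀ d : Fin p, Integrable (fun ω => B c d * (u τ ω d * u r ω b)) ℙ :=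
        fun d => (L2mul (humom τ d) (humom r b)).const_mul _
      have i3 : Integrable (fun ω => w τ ω c * u r ω b) ℙ := L2mul (hwmom τ c) (humom r b)
      have i23 : Integrable (fun ω => (∑ d, B c d * (u τ ω d * u r ω b)) + w τ ω c * u r ω b) ℙ := by
        exact (integrable_finset_sum (μ := ℙ) Finset.univ (fun d _ => i2 d)).add i3
      rw [hrw, integral_add (integrable_finset_sum (μ := ℙ) Finset.univ (fun d _ => i1 d)) i23,
        integral_add (integrable_finset_sum (μ := ℙ) Finset.univ (fun d _ => i2 d)) i3,
        integral_finset_sum Finset.univ (fun d _ => i1 d), integral_finset_sum Finset.univ (fun d _ => i2 d)]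
      simp_rw [integral_const_mul]
      rw [horth r b _ (hwmom τ c) (hIwu τ r c b)]
      simp_rw [ih, hcov_uu]
      rcases lt_trichotomy r τ with hlt | heq | hgt
      · simp only [if_pos hlt, if_neg (show ¬ τ = r by omega), if_pos (show r < τ + 1 by omega),
          mul_zero, Finset.sum_const_zero, add_zero]
        rw [show τ + 1 - r - 1 = (τ - r - 1) + 1 from by omega, pow_succ', Matrix.mul_assoc,
          Matrix.mul_apply]
      · subst heq
        simp only [if_neg (lt_irrefl r), if_pos rfl, if_pos (Nat.lt_succ_self r), mul_zero,
          Finset.sum_const_zero, zero_add, add_zero]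
        rw [show r + 1 - r - 1 = 0 from by omega, pow_zero, Matrix.one_mul]
        simp [mul_ite, Finset.sum_ite_eq']
      · simp only [if_neg (show ¬ r < τ by omega), if_neg (show ¬ τ = r by omega),
          if_neg (show ¬ r < τ + 1 by omega), mul_zero, Finset.sum_const_zero, add_zero]
  -- covariance of y with u
  have hcov_yu : ∀ τ (r : ℕ) (a : Fin m) (b : Fin p),
      ∫ ω, y τ ω a * u r ω b
        = if r = τ then D a b else (if r < τ then (C * A ^ (τ - r - 1) * B) a b else 0) := by
    intro τ r a b
    have hrw : (fun ω => y τ ω a * u r ω b)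
        = fun ω => (∑ d, C a d * (x τ ω d * u r ω b))
          + ((∑ d, D a d * (u τ ω d * u r ω b)) + z τ ω a * u r ω b) := by
      funext ω; rw [hy]
      simp [Matrix.mulVec, dotProduct, add_mul, Finset.sum_mul, mul_assoc, add_assoc]
    have i1 : ∀ d : Fin n, Integrable (fun ω => C a d * (x τ ω d * u r ω b)) ℙ :=
      fun d => (L2mul (hxmom τ d) (humom r b)).const_mul _
    have i2 : ∀ d : Fin p, Integrable (fun ω => D a d * (u τ ω d * u r ω b)) ℙ :=
      fun d => (L2mul (humom τ d) (humom r b)).const_mul _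
    have i3 : Integrable (fun ω => z τ ω a * u r ω b) ℙ := L2mul (hzmom τ a) (humom r b)
    have i23 : Integrable (fun ω => (∑ d, D a d * (u τ ω d * u r ω b)) + z τ ω a * u r ω b) ℙ := by
      exact (integrable_finset_sum (μ := ℙ) Finset.univ (fun d _ => i2 d)).add i3
    rw [hrw, integral_add (integrable_finset_sum (μ := ℙ) Finset.univ (fun d _ => i1 d)) i23,
      integral_add (integrable_finset_sum (μ := ℙ) Finset.univ (fun d _ => i2 d)) i3,
      integral_finset_sum Finset.univ (fun d _ => i1 d), integral_finset_sum Finset.univ (fun d _ => i2 d)]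
    simp_rw [integral_const_mul]
    rw [horth r b _ (hzmom τ a) (hIzu τ r a b)]
    simp_rw [hcov_xu, hcov_uu]
    rcases lt_trichotomy r τ with hlt | heq | hgt
    · simp only [if_pos hlt, if_neg (show ¬ τ = r by omega), if_neg (show ¬ r = τ by omega),
        mul_zero, Finset.sum_const_zero, add_zero]
      rw [Matrix.mul_assoc, Matrix.mul_apply]
    · subst heq
      simp only [if_neg (lt_irrefl r), if_pos rfl, mul_zero, Finset.sum_const_zero, zero_add,
        add_zero]
      simp [mul_ite, Finset.sum_ite_eq']
    · simp only [if_neg (show ¬ r < τ by omega), if_neg (show ¬ τ = r by omega),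
        if_neg (show ¬ r = τ by omega), mul_zero, Finset.sum_const_zero, add_zero]
  -- final assembly
  intro j hj a b
  have hrw : (fun ω => (y t ω - ∑ i ∈ Finset.Icc 1 s, (α i).mulVec (y (t - k - i) ω)) a
        * u (t - j) ω b)
      = fun ω => y t ω a * u (t - j) ω b
        - ∑ i ∈ Finset.Icc 1 s, ∑ c, (α i) a c * (y (t - k - i) ω c * u (t - j) ω b) := by
    funext ω
    simp [Matrix.mulVec, dotProduct, sub_mul, Finset.sum_mul, mul_assoc,
      Finset.sum_apply]
  have iA : Integrable (fun ω => y t ω a * u (t - j) ω b) ℙ := L2mul (hymom t a) (humom _ b)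
  have iB : ∀ i ∈ Finset.Icc 1 s,
      Integrable (fun ω => ∑ c, (α i) a c * (y (t - k - i) ω c * u (t - j) ω b)) ℙ :=
    fun i _ => integrable_finset_sum (μ := ℙ) Finset.univ
      (fun c _ => (L2mul (hymom _ c) (humom _ b)).const_mul _)
  have iB' : Integrable (fun ω =>
      ∑ i ∈ Finset.Icc 1 s, ∑ c, (α i) a c * (y (t - k - i) ω c * u (t - j) ω b)) ℙ :=
    integrable_finset_sum (μ := ℙ) _ iB
  rw [hrw, integral_sub iA iB', integral_finset_sum _ iB]
  have hzero : ∀ i ∈ Finset.Icc 1 s,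
      ∫ ω, ∑ c, (α i) a c * (y (t - k - i) ω c * u (t - j) ω b) = 0 := by
    intro i hi
    obtain ⟨hi1, hi2⟩ := Finset.mem_Icc.mp hi
    rw [integral_finset_sum Finset.univ
      (fun c _ => (L2mul (hymom _ c) (humom _ b)).const_mul _)]
    apply Finset.sum_eq_zero; intro c _
    rw [integral_const_mul, hcov_yu, if_neg (show ¬ t - j = t - k - i by omega),
      if_neg (show ¬ t - j < t - k - i by omega), mul_zero]
  rw [Finset.sum_eq_zero hzero, sub_zero, hcov_yu]
  by_cases hj0 : j = 0
  · subst hj0; simp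
  · rw [if_neg hj0, if_neg (show ¬ t - j = t by omega), if_pos (show t - j < t by omega),
      show t - (t - j) - 1 = j - 1 from by omega]
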